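/- Let T be θ-averaged with respect to ‖·‖_M (θ ∈ (0,1]) with infimal displacement vector v, S = (1/θ)(I - T), and z ∈ H. Then for the iterates z^{k+1} = (I - αθS)z^k with z⁰ = z: ‖S z - S z^k‖_M ≤ ‖S z - (1/θ)v‖_M + √(‖S z‖_M² - ‖(1/θ)v‖_M²) for every k. -/

import Mathlib

/-- The `M`-inner product induced by a positive definite self-adjoint operator `M`. -/
noncomputable def Minner {H : Type*} [NormedAddCommGroup H] [InnerProductSpace ℝ H]
    (M : H →L[ℝ] H) (x y : H) : ℝ := inner ℝ x (M y)

/-- The `M`-norm. -/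
noncomputable def Mnorm {H : Type*} [NormedAddCommGroup H] [InnerProductSpace ℝ H]
    (M : H →L[ℝ] H) (x : H) : ℝ := Real.sqrt (Minner M x x)

section aux
variable {H : Type*} [NormedAddCommGroup H] [InnerProductSpace ℝ H] (M : H →L[ℝ] H)

lemma Minner_add_left (x y u : H) : Minner M (x + y) u = Minner M x u + Minner M y u := by
  unfold Minner; exact inner_add_left x y (M u)

lemma Minner_sub_left (x y u : H) : Minner M (x - y) u = Minner M x u - Minner M y u := by
  unfold Minner; exact inner_sub_left x y (M u)

lemma Minner_smul_left (c : ℝ) (x u : H) : Minner M (c • x) u = c * Minner M x u := by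
  unfold Minner; exact real_inner_smul_left x (M u) c

lemma Minner_add_right (x y u : H) : Minner M u (x + y) = Minner M u x + Minner M u y := by
  unfold Minner; rw [map_add, inner_add_right]

lemma Minner_sub_right (x y u : H) : Minner M u (x - y) = Minner M u x - Minner M u y := by
  unfold Minner; rw [map_sub, inner_sub_right]

lemma Minner_smul_right (c : ℝ) (x u : H) : Minner M u (c • x) = c * Minner M u x := by
  unfold Minner; rw [map_smul]; exact real_inner_smul_right u (M x) c

lemma Minner_comm (hMsym : ∀ x y : H, (inner ℝ (M x) y : ℝ) = inner ℝ x (M y)) (x y : H) : Minner M x y = Minner M y x := by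
  unfold Minner; rw [← hMsym]; exact real_inner_comm _ _

lemma Minner_self_nonneg (hMpos : ∀ x : H, x ≠ 0 → 0 < (inner ℝ x (M x) : ℝ)) (x : H) : 0 ≤ Minner M x x := by
  rcases eq_or_ne x 0 with h | h
  · simp [Minner, h]
  · exact le_of_lt (hMpos x h)

lemma Mnorm_sq (hMpos : ∀ x : H, x ≠ 0 → 0 < (inner ℝ x (M x) : ℝ)) (x : H) : Mnorm M x ^ 2 = Minner M x x :=
  Real.sq_sqrt (Minner_self_nonneg M hMpos x)

lemma Mnorm_nonneg (x : H) : 0 ≤ Mnorm M x := Real.sqrt_nonneg _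

lemma Minner_le_Mnorm_mul (hMsym : ∀ x y : H, (inner ℝ (M x) y : ℝ) = inner ℝ x (M y)) (hMpos : ∀ x : H, x ≠ 0 → 0 < (inner ℝ x (M x) : ℝ)) (x y : H) : Minner M x y ≤ Mnorm M x * Mnorm M y := by
  have key : (2 * Minner M x y) ^ 2 - 4 * Minner M x x * Minner M y y ≤ 0 := by
    have h := discrim_le_zero (a := Minner M x x) (b := 2 * Minner M x y)
      (c := Minner M y y) ?_
    · simpa [discrim] using h
    · intro t
      have h0 := Minner_self_nonneg M hMpos (t • x + y)
      have : Minner M (t • x + y) (t • x + y)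
          = Minner M x x * t ^ 2 + (2 * Minner M x y) * t + Minner M y y := by
        rw [Minner_add_left, Minner_add_right, Minner_add_right, Minner_smul_left,
          Minner_smul_left, Minner_smul_right, Minner_smul_right,
          Minner_comm M hMsym y x]
        ring
      linarith [this ▸ h0]
  have h2 : Minner M x y ^ 2 ≤ Minner M x x * Minner M y y := by nlinarith
  calc Minner M x y ≤ |Minner M x y| := le_abs_self _
    _ = Real.sqrt (Minner M x y ^ 2) := (Real.sqrt_sq_eq_abs _).symm
    _ ≤ Real.sqrt (Minner M x x * Minner M y y) := Real.sqrt_le_sqrt h2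
    _ = Mnorm M x * Mnorm M y := Real.sqrt_mul (Minner_self_nonneg M hMpos x) _

lemma Mnorm_add_le (hMsym : ∀ x y : H, (inner ℝ (M x) y : ℝ) = inner ℝ x (M y)) (hMpos : ∀ x : H, x ≠ 0 → 0 < (inner ℝ x (M x) : ℝ)) (x y : H) : Mnorm M (x + y) ≤ Mnorm M x + Mnorm M y := by
  have h : Minner M (x + y) (x + y) ≤ (Mnorm M x + Mnorm M y) ^ 2 := by
    rw [Minner_add_left, Minner_add_right, Minner_add_right,
      Minner_comm M hMsym y x]
    have hcs := Minner_le_Mnorm_mul M hMsym hMpos x y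
    have hx := Mnorm_sq M hMpos x
    have hy := Mnorm_sq M hMpos y
    nlinarith
  calc Mnorm M (x + y) = Real.sqrt (Minner M (x + y) (x + y)) := rfl
    _ ≤ Real.sqrt ((Mnorm M x + Mnorm M y) ^ 2) := Real.sqrt_le_sqrt h
    _ = |Mnorm M x + Mnorm M y| := Real.sqrt_sq_eq_abs _
    _ = Mnorm M x + Mnorm M y := abs_of_nonneg (add_nonneg (Real.sqrt_nonneg _) (Real.sqrt_nonneg _))

end aux

/-- Uniform bound `‖S z - S zᵏ‖_M ≤ ‖S z - (1/θ)v‖_M + √(‖S z‖_M² - ‖(1/θ)v‖_M²)`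
along the averaged iteration `zᵏ⁺¹ = zᵏ - αθ S zᵏ` with `z⁰ = z`. -/
theorem stmt16 {H : Type*} [NormedAddCommGroup H] [InnerProductSpace ℝ H]
    (M : H →L[ℝ] H)
    (hMsym : ∀ x y : H, (inner ℝ (M x) y : ℝ) = inner ℝ x (M y))
    (hMpos : ∀ x : H, x ≠ 0 → 0 < (inner ℝ x (M x) : ℝ))
    (θ α : ℝ) (hθ : θ ∈ Set.Ioc (0 : ℝ) 1) (hα : α ∈ Set.Ioc (0 : ℝ) 1)
    (T S : H → H) (hS : ∀ x, S x = (1 / θ) • (x - T x))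
    (hcoco : ∀ x y, Minner M (S x - S y) (x - y) ≥ (1 / 2) * (Mnorm M (S x - S y)) ^ 2)
    (v : H)
    (hv_mem : v ∈ closure (Set.range fun x => x - T x))
    (hv_min : ∀ w ∈ closure (Set.range fun x => x - T x), Mnorm M v ≤ Mnorm M w)
    (hv_char : ∀ y ∈ Set.range (fun x => x - T x), Minner M (y - v) v ≥ 0)
    (z0 : H) (z : ℕ → H) (hz0 : z 0 = z0)
    (hzstep : ∀ k, z (k + 1) = z k - (α * θ) • S (z k)) :
    ∀ k : ℕ, Mnorm M (S z0 - S (z k)) ≤ Mnorm M (S z0 - (1 / θ) • v)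
      + Real.sqrt ((Mnorm M (S z0)) ^ 2 - (Mnorm M ((1 / θ) • v)) ^ 2) := by
  obtain ⟨hθ0, hθ1⟩ := hθ
  obtain ⟨hα0, hα1⟩ := hα
  set w : H := (1 / θ) • v with hw
  have hθne : θ ≠ 0 := ne_of_gt hθ0
  have sqSelf := Mnorm_sq M hMpos
  -- S x represents displacement: θ • S x = x - T x
  have hdisp : ∀ x : H, θ • S x = x - T x := by
    intro x; rw [hS x, smul_smul]; field_simp; simp
  -- obtuse angle condition
  have obtuse : ∀ x : H, 0 ≤ Minner M (S x - w) w := by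
    intro x
    have h := hv_char (θ • S x) ⟨x, (hdisp x).symm⟩
    have hexp : Minner M (S x - w) w = (1 / θ) ^ 2 * Minner M (θ • S x - v) v := by
      have hS' : S x - w = (1 / θ) • (θ • S x - v) := by
        rw [smul_sub, smul_smul, hw]; field_simp; simp
      rw [hS', hw, Minner_smul_left, Minner_smul_right]; ring
    rw [hexp]
    exact mul_nonneg (by positivity) h
  -- monotone decrease of ‖S zₖ‖²
  have mono : ∀ k : ℕ, Minner M (S (z (k + 1))) (S (z (k + 1))) ≤ Minner M (S (z k)) (S (z k)) := by
    intro k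
    set u : H := S (z (k + 1)) - S (z k) with hu
    have hstep : z (k + 1) - z k = (-(α * θ)) • S (z k) := by
      rw [hzstep k]; rw [neg_smul]; abel
    have hc := hcoco (z (k + 1)) (z k)
    rw [hstep, Minner_smul_right, ← hu] at hc
    rw [sqSelf] at hc
    have huu : 0 ≤ Minner M u u := Minner_self_nonneg M hMpos u
    have hαθ : 0 < α * θ := mul_pos hα0 hθ0
    have hαθ1 : α * θ ≤ 1 := by nlinarith
    have hI : Minner M u (S (z k)) ≤ 0 := by nlinarith [hc, huu]
    have h1 : (1 - α * θ) * (-(Minner M u (S (z k)))) ≥ 0 :=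
      mul_nonneg (by linarith) (by linarith)
    have hexp : Minner M (S (z (k + 1))) (S (z (k + 1)))
        = Minner M (S (z k)) (S (z k)) + 2 * Minner M u (S (z k)) + Minner M u u := by
      have hsplit : S (z (k + 1)) = S (z k) + u := by rw [hu]; abel
      rw [hsplit, Minner_add_left, Minner_add_right, Minner_add_right,
        Minner_comm M hMsym (S (z k)) u]
      ring
    rw [hexp]
    nlinarith [hc, huu, h1]
  have mono' : ∀ k : ℕ, Minner M (S (z k)) (S (z k)) ≤ Minner M (S z0) (S z0) := by
    intro k
    induction k with
    | zero => rw [hz0]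
    | succ n ih => exact le_trans (mono n) ih
  -- key bound : ‖S zₖ - w‖² ≤ ‖S z0‖² - ‖w‖²
  have key : ∀ k : ℕ, Minner M (S (z k) - w) (S (z k) - w)
      ≤ Mnorm M (S z0) ^ 2 - Mnorm M w ^ 2 := by
    intro k
    have hob := obtuse (z k)
    rw [Minner_sub_left] at hob
    have hexp : Minner M (S (z k) - w) (S (z k) - w)
        = Minner M (S (z k)) (S (z k)) - 2 * Minner M (S (z k)) w + Minner M w w := by
      rw [Minner_sub_left, Minner_sub_right, Minner_sub_right,
        Minner_comm M hMsym w (S (z k))]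
      ring
    rw [hexp, sqSelf, sqSelf]
    have := mono' k
    linarith
  -- nonnegativity under the sqrt
  have hnn : 0 ≤ Mnorm M (S z0) ^ 2 - Mnorm M w ^ 2 :=
    le_trans (Minner_self_nonneg M hMpos _) (key 0)
  intro k
  have tri : Mnorm M (S z0 - S (z k)) ≤ Mnorm M (S z0 - w) + Mnorm M (w - S (z k)) := by
    have : S z0 - S (z k) = (S z0 - w) + (w - S (z k)) := by abel
    rw [this]; exact Mnorm_add_le M hMsym hMpos _ _
  have hlast : Mnorm M (w - S (z k)) ≤ Real.sqrt (Mnorm M (S z0) ^ 2 - Mnorm M w ^ 2) := by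
    have hsym : Minner M (w - S (z k)) (w - S (z k)) = Minner M (S (z k) - w) (S (z k) - w) := by
      have : w - S (z k) = -(S (z k) - w) := by abel
      rw [this]
      have : (-(S (z k) - w)) = (-1 : ℝ) • (S (z k) - w) := by simp
      rw [this, Minner_smul_left, Minner_smul_right]; ring
    calc Mnorm M (w - S (z k)) = Real.sqrt (Minner M (w - S (z k)) (w - S (z k))) := rfl
      _ ≤ Real.sqrt (Mnorm M (S z0) ^ 2 - Mnorm M w ^ 2) := by
          apply Real.sqrt_le_sqrt; rw [hsym]; exact key k
  linarith
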